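/- In the state-based distributed AP association game, if player k in state s = (s_k, s_{-k}) performs a better response update to b_k with V_k(b_k, s_{-k}, s) > V_k(s, s), then the state-based potential Ψ(b_k, s_{-k}, s) > Ψ(s, s), where Ψ(b, s) = Σ_k ln U_{b_k} + Σ_n Σ_{i=0}^{x_n(b)} ln g(i) + Σ_k ln H^k_{b_k}. -/

import Mathlib

open Finset

/-- The load of AP `n` under association profile `b` : number of users associated with `n`. -/
def load {K I : Type*} [Fintype K] [DecidableEq I] (b : K → I) (n : I) : ℕ :=
  (Finset.univ.filter (fun k => b k = n)).card

lemma load_update {K I : Type*} [Fintype K] [DecidableEq K] [DecidableEq I]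
    (s : K → I) (k : K) (bk : I) (n : I) :
    load (Function.update s k bk) n + (if s k = n then 1 else 0)
      = load s n + (if bk = n then 1 else 0) := by
  classical
  have h : ∀ (b : K → I), load b n = ∑ j : K, (if b j = n then 1 else 0) := by
    intro b
    unfold load
    rw [Finset.card_filter]
  rw [h, h]
  have h1 : (fun j => if Function.update s k bk j = n then 1 else 0)
      = Function.update (fun j => if s j = n then (1:ℕ) else 0) k
          (if bk = n then 1 else 0) := by
    funext j
    by_cases hj : j = k
    · subst hj; simp
    · simp [Function.update_of_ne hj]
  rw [h1, Finset.sum_update_of_mem (Finset.mem_univ k)]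
  have h2 : ∑ j : K, (if s j = n then (1:ℕ) else 0)
      = (if s k = n then 1 else 0) + ∑ j ∈ Finset.univ \ {k}, (if s j = n then (1:ℕ) else 0) := by
    rw [← Finset.sum_update_of_mem (Finset.mem_univ k)]
    congr 1
    funext j
    by_cases hj : j = k
    · subst hj; simp
    · simp [Function.update_of_ne hj]
  rw [h2]
  ring

theorem stmt12 {K I : Type*} [Fintype K] [DecidableEq K] [Fintype I] [DecidableEq I]
    (UAP : I → ℝ) (H : K → I → ℝ) (δ : K → ℝ) (dst : I → I → ℝ) (g : ℕ → ℝ)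
    (hUAP : ∀ n, 0 < UAP n) (hH : ∀ k n, 1 ≤ H k n) (hδ : ∀ k, 0 < δ k)
    (hdst0 : ∀ n, dst n n = 0) (hdstpos : ∀ n m, n ≠ m → 0 < dst n m)
    (hg : ∀ i, 0 < g i) (hg1 : ∀ i, g i ≤ 1) (hganti : Antitone g)
    (V : K → (K → I) → (K → I) → ℝ)
    (hV : ∀ k b s, V k b s =
      H k (b k) * UAP (b k) * g (load b (b k)) - δ k * dst (b k) (s k))
    (Ψ : (K → I) → (K → I) → ℝ)
    (hΨ : ∀ b s, Ψ b s = ∑ k : K, Real.log (UAP (b k))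
      + ∑ n : I, ∑ i ∈ Finset.range (load b n + 1), Real.log (g i)
      + ∑ k : K, Real.log (H k (b k)))
    (s : K → I) (k : K) (bk : I)
    (himp : V k (Function.update s k bk) s > V k s s) :
    Ψ (Function.update s k bk) s > Ψ s s := by
  classical
  have hbne : bk ≠ s k := by
    intro h
    rw [h, Function.update_eq_self] at himp
    exact lt_irrefl _ himp
  set b' := Function.update s k bk with hb'
  have hb'k : b' k = bk := Function.update_self k bk s
  -- load facts
  have hA : load b' bk = load s bk + 1 := by
    have := load_update s k bk bk
    rw [← hb'] at this
    simp [Ne.symm hbne] at this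
    omega
  have hB : load b' (s k) + 1 = load s (s k) := by
    have := load_update s k bk (s k)
    rw [← hb'] at this
    simp [hbne] at this
    omega
  have hC : ∀ n, n ≠ bk → n ≠ s k → load b' n = load s n := by
    intro n h1 h2
    have := load_update s k bk n
    rw [← hb'] at this
    simp [Ne.symm h1, Ne.symm h2] at this
    omega
  -- sums over players
  have hu : ∀ (f : I → ℝ), ∑ j : K, f (b' j) = ∑ j : K, f (s j) - f (s k) + f bk := by
    intro f
    have h1 : (fun j => f (b' j)) = Function.update (fun j => f (s j)) k (f bk) := by
      funext j
      by_cases hj : j = k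
      · subst hj; simp [hb']
      · simp [hb', Function.update_of_ne hj]
    rw [h1, Finset.sum_update_of_mem (Finset.mem_univ k)]
    have h2 : ∑ j : K, f (s j) = f (s k) + ∑ j ∈ Finset.univ \ {k}, f (s j) := by
      rw [← Finset.sum_update_of_mem (Finset.mem_univ k)]
      congr 1
      funext j
      by_cases hj : j = k
      · subst hj; simp
      · simp [Function.update_of_ne hj]
    rw [h2]; ring
  have huH : ∑ j : K, Real.log (H j (b' j)) = ∑ j : K, Real.log (H j (s j))
      - Real.log (H k (s k)) + Real.log (H k bk) := by
    have h1 : (fun j => Real.log (H j (b' j)))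
        = Function.update (fun j => Real.log (H j (s j))) k (Real.log (H k bk)) := by
      funext j
      by_cases hj : j = k
      · subst hj; simp [hb']
      · simp [hb', Function.update_of_ne hj]
    rw [h1, Finset.sum_update_of_mem (Finset.mem_univ k)]
    have h2 : ∑ j : K, Real.log (H j (s j))
        = Real.log (H k (s k)) + ∑ j ∈ Finset.univ \ {k}, Real.log (H j (s j)) := by
      rw [← Finset.sum_update_of_mem (Finset.mem_univ k)]
      congr 1
      funext j
      by_cases hj : j = k
      · subst hj; simp
      · simp [Function.update_of_ne hj]
    rw [h2]; ring
  -- middle sum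
  have hmid : ∑ n : I, ∑ i ∈ Finset.range (load b' n + 1), Real.log (g i)
      - ∑ n : I, ∑ i ∈ Finset.range (load s n + 1), Real.log (g i)
      = Real.log (g (load b' bk)) - Real.log (g (load s (s k))) := by
    rw [← Finset.sum_sub_distrib]
    rw [Finset.sum_eq_add bk (s k) hbne]
    · have e1 : ∑ i ∈ Finset.range (load b' bk + 1), Real.log (g i)
          - ∑ i ∈ Finset.range (load s bk + 1), Real.log (g i)
          = Real.log (g (load b' bk)) := by
        rw [Finset.sum_range_succ (fun i => Real.log (g i)) (load b' bk)]
        rw [hA]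
        ring
      have e2 : ∑ i ∈ Finset.range (load b' (s k) + 1), Real.log (g i)
          - ∑ i ∈ Finset.range (load s (s k) + 1), Real.log (g i)
          = - Real.log (g (load s (s k))) := by
        rw [← hB]
        rw [Finset.sum_range_succ (fun i => Real.log (g i)) (load b' (s k) + 1)]
        ring
      rw [e1, e2]
      ring
    · intro c _ hc
      rw [hC c hc.1 hc.2]
      ring
    · intro h; exact absurd (Finset.mem_univ bk) h
    · intro h; exact absurd (Finset.mem_univ (s k)) h
  -- payoff inequality
  have hVineq : H k (s k) * UAP (s k) * g (load s (s k))
      < H k bk * UAP bk * g (load b' bk) := by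
    rw [hV, hV, hb'k, hdst0] at himp
    have hd : 0 < δ k * dst bk (s k) := mul_pos (hδ k) (hdstpos _ _ hbne)
    nlinarith [himp]
  have hHpos : ∀ j n, (0:ℝ) < H j n := fun j n => lt_of_lt_of_le one_pos (hH j n)
  have hBpos : 0 < H k (s k) * UAP (s k) * g (load s (s k)) :=
    mul_pos (mul_pos (hHpos k (s k)) (hUAP (s k))) (hg _)
  have hlog := Real.log_lt_log hBpos hVineq
  rw [Real.log_mul (mul_ne_zero (ne_of_gt (hHpos k (s k))) (ne_of_gt (hUAP (s k)))) (ne_of_gt (hg _)),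
      Real.log_mul (ne_of_gt (hHpos k (s k))) (ne_of_gt (hUAP (s k))),
      Real.log_mul (mul_ne_zero (ne_of_gt (hHpos k bk)) (ne_of_gt (hUAP bk))) (ne_of_gt (hg _)),
      Real.log_mul (ne_of_gt (hHpos k bk)) (ne_of_gt (hUAP bk))] at hlog
  rw [hΨ, hΨ, hu (fun n => Real.log (UAP n)), huH]
  have := hmid
  linarith
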